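/- Fix a real number n and a positive integer k. For 0 ≤ m ≤ k define q_m(y) = Σ_{l=0}^m (−1)^{m−l} (n/2+l)_{m−l} (k−m)_{m−l} C(m,l) ∏_{j=1}^l [y − j(j−1)], where (a)_0 = 1, (a)_s = a(a+1)⋯(a+s−1), C(m,l) is the binomial coefficient, and the empty product (l = 0) is 1. Then these polynomials satisfy q_0 = 1 and the recursion q_{m+1} = [y − 2m(k−m−n/2) − n(k−1)/2]·q_m − m(m−k)(m−1+n/2)(m−1+n/2−k)·q_{m−1} for 0 ≤ m ≤ k−1 (with q_{−1} := 0). -/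

import Mathlib

open Finset

/-- The Pochhammer symbol `(a)_s = a(a+1)⋯(a+s−1)`, with `(a)_0 = 1`. -/
noncomputable def poch (a : ℝ) (s : ℕ) : ℝ := ∏ i ∈ Finset.range s, (a + (i : ℝ))

/-- The explicit dual-Hahn-type polynomials
`q_m(y) = Σ_{l=0}^m (−1)^{m−l} (n/2+l)_{m−l} (k−m)_{m−l} C(m,l) ∏_{j=1}^l [y − j(j−1)]`. -/
noncomputable def dualHahnQ (n : ℝ) (k : ℕ) (m : ℕ) (y : ℝ) : ℝ :=
  ∑ l ∈ Finset.range (m + 1),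
    (-1 : ℝ)^(m - l) * poch (n/2 + (l : ℝ)) (m - l) * poch ((k : ℝ) - (m : ℝ)) (m - l)
      * (Nat.choose m l : ℝ) * ∏ j ∈ Finset.Icc 1 l, (y - (j : ℝ) * ((j : ℝ) - 1))

/- ### Auxiliary definitions and lemmas -/

noncomputable def dhB (y : ℝ) (l : ℕ) : ℝ := ∏ j ∈ Finset.Icc 1 l, (y - (j : ℝ) * ((j : ℝ) - 1))

noncomputable def dhc (n : ℝ) (k : ℕ) (m l : ℕ) : ℝ :=
  (-1 : ℝ)^(m - l) * poch (n/2 + (l : ℝ)) (m - l) * poch ((k : ℝ) - (m : ℝ)) (m - l)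
    * (Nat.choose m l : ℝ)

noncomputable def dhs (n : ℝ) (k M : ℕ) : ℕ → ℝ
  | 0 => 0
  | l + 1 => dhc n k (M + 1) l

lemma dualHahnQ_eq (n : ℝ) (k m : ℕ) (y : ℝ) :
    dualHahnQ n k m y = ∑ l ∈ Finset.range (m + 1), dhc n k m l * dhB y l := rfl

lemma poch_zero (a : ℝ) : poch a 0 = 1 := by simp [poch]

lemma poch_succ (a : ℝ) (s : ℕ) : poch a (s + 1) = poch a s * (a + (s : ℝ)) :=
  Finset.prod_range_succ _ _

lemma poch_succ' (a : ℝ) (s : ℕ) : poch a (s + 1) = a * poch (a + 1) s := by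
  rw [poch, Finset.prod_range_succ', poch, mul_comm]
  congr 1
  · simp
  · exact Finset.prod_congr rfl fun i _ => by push_cast; ring

lemma poch_one (a : ℝ) : poch a 1 = a := by simp [poch]

lemma poch_two (a : ℝ) (s : ℕ) : poch a (s + 2) = poch a s * (a + (s : ℝ)) * (a + (s : ℝ) + 1) := by
  show poch a (s + 1 + 1) = _
  rw [poch_succ, poch_succ]
  push_cast; ring

lemma poch_front_two (a : ℝ) (s : ℕ) : poch a (s + 2) = a * (a + 1) * poch (a + 1 + 1) s := by
  show poch a (s + 1 + 1) = _
  rw [poch_succ', poch_succ']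
  ring

lemma poch_front_back (a : ℝ) (s : ℕ) :
    poch a (s + 2) = a * poch (a + 1) s * (a + 1 + (s : ℝ)) := by
  show poch a (s + 1 + 1) = _
  rw [poch_succ', poch_succ]
  ring

lemma dhB_zero (y : ℝ) : dhB y 0 = 1 := by simp [dhB]

lemma dhB_succ (y : ℝ) (l : ℕ) :
    dhB y (l + 1) = dhB y l * (y - ((l : ℝ) + 1) * (l : ℝ)) := by
  rw [dhB, dhB, Finset.prod_Icc_succ_top (Nat.succ_le_succ (Nat.zero_le l))]
  push_cast; ring

lemma y_mul_dhB (y : ℝ) (l : ℕ) :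
    y * dhB y l = dhB y (l + 1) + ((l : ℝ) + 1) * (l : ℝ) * dhB y l := by
  rw [dhB_succ]; ring

lemma dhc_self (n : ℝ) (k m : ℕ) : dhc n k m m = 1 := by
  simp [dhc, Nat.sub_self, poch_zero]

lemma dhc_of_lt (n : ℝ) (k : ℕ) {m l : ℕ} (h : m < l) : dhc n k m l = 0 := by
  simp [dhc, Nat.choose_eq_zero_of_lt h]

lemma keyC0 (n : ℝ) (k M : ℕ) :
    dhc n k (M + 2) 0
      = ((((0:ℕ) : ℝ) + 1) * ((0:ℕ) : ℝ)
            - (2 * ((M : ℝ) + 1) * ((k : ℝ) - ((M : ℝ) + 1) - n/2) + n * ((k : ℝ) - 1)/2))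
          * dhc n k (M + 1) 0
        - ((M : ℝ) + 1) * (((M : ℝ) + 1) - (k : ℝ)) * (((M : ℝ) + 1) - 1 + n/2)
            * (((M : ℝ) + 1) - 1 + n/2 - (k : ℝ)) * dhc n k M 0 := by
  simp only [dhc, Nat.sub_zero, Nat.choose_zero_right, Nat.cast_one, mul_one]
  rw [poch_two (n/2 + ((0:ℕ) : ℝ)) M, poch_front_two ((k : ℝ) - ((M + 2 : ℕ) : ℝ)) M,
    poch_succ (n/2 + ((0:ℕ) : ℝ)) M, poch_succ' ((k : ℝ) - ((M + 1 : ℕ) : ℝ)) M,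
    show (k : ℝ) - ((M + 2 : ℕ) : ℝ) + 1 + 1 = (k : ℝ) - ((M : ℕ) : ℝ) from by push_cast; ring,
    show (k : ℝ) - ((M + 1 : ℕ) : ℝ) + 1 = (k : ℝ) - ((M : ℕ) : ℝ) from by push_cast; ring]
  push_cast
  ring

lemma keyB (n : ℝ) (k M : ℕ) :
    dhc n k (M + 2) (M + 1)
      = dhc n k (M + 1) M
        + ((((M + 1 : ℕ) : ℝ) + 1) * ((M + 1 : ℕ) : ℝ)
            - (2 * ((M : ℝ) + 1) * ((k : ℝ) - ((M : ℝ) + 1) - n/2) + n * ((k : ℝ) - 1)/2))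
          * dhc n k (M + 1) (M + 1)
        - ((M : ℝ) + 1) * (((M : ℝ) + 1) - (k : ℝ)) * (((M : ℝ) + 1) - 1 + n/2)
            * (((M : ℝ) + 1) - 1 + n/2 - (k : ℝ)) * dhc n k M (M + 1) := by
  rw [dhc_self, dhc_of_lt n k (Nat.lt_succ_self M)]
  simp only [dhc, show M + 2 - (M + 1) = 1 from by omega, show M + 1 - M = 1 from by omega,
    poch_one, pow_one, Nat.choose_succ_self_right]
  push_cast
  ring

set_option maxRecDepth 8000 in
set_option maxHeartbeats 2000000 in
lemma keyC1 (n : ℝ) (k l s : ℕ) :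
    dhc n k (l + 1 + s + 2) (l + 1)
      = dhc n k (l + 1 + s + 1) l
        + ((((l + 1 : ℕ) : ℝ) + 1) * ((l + 1 : ℕ) : ℝ)
            - (2 * (((l + 1 + s : ℕ) : ℝ) + 1) * ((k : ℝ) - (((l + 1 + s : ℕ) : ℝ) + 1) - n/2)
                + n * ((k : ℝ) - 1)/2))
          * dhc n k (l + 1 + s + 1) (l + 1)
        - (((l + 1 + s : ℕ) : ℝ) + 1) * ((((l + 1 + s : ℕ) : ℝ) + 1) - (k : ℝ))
            * ((((l + 1 + s : ℕ) : ℝ) + 1) - 1 + n/2)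
            * ((((l + 1 + s : ℕ) : ℝ) + 1) - 1 + n/2 - (k : ℝ)) * dhc n k (l + 1 + s) (l + 1) := by
  -- choose relations
  have n1 : (l + 1 + s + 2) * ((l + 1 + s + 1).choose (l + 1))
      = ((l + 1 + s + 2).choose (l + 1)) * (s + 2) := by
    have h1 := Nat.add_one_mul_choose_eq (l + 1 + s + 1) (l + 1)
    rw [show l + 1 + s + 1 + 1 = l + 1 + s + 2 from by omega] at h1
    have h2 := Nat.choose_succ_right_eq (l + 1 + s + 2) (l + 1)
    rw [show l + 1 + s + 2 - (l + 1) = s + 2 from by omega] at h2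
    exact h1.trans h2
  have n2 : ((l + 1 + s + 1).choose (l + 1)) * (l + 1)
      = ((l + 1 + s + 1).choose l) * (s + 2) := by
    have h2 := Nat.choose_succ_right_eq (l + 1 + s + 1) l
    rw [show l + 1 + s + 1 - l = s + 2 from by omega] at h2
    exact h2
  have n3 : (l + 1 + s + 1) * ((l + 1 + s).choose (l + 1))
      = ((l + 1 + s + 1).choose (l + 1)) * (s + 1) := by
    have h1 := Nat.add_one_mul_choose_eq (l + 1 + s) (l + 1)
    have h2 := Nat.choose_succ_right_eq (l + 1 + s + 1) (l + 1)
    rw [show l + 1 + s + 1 - (l + 1) = s + 1 from by omega] at h2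
    exact h1.trans h2
  have e1 : ((l : ℝ) + 1 + (s : ℝ) + 2) * (((l + 1 + s + 1).choose (l + 1) : ℕ) : ℝ)
      = (((l + 1 + s + 2).choose (l + 1) : ℕ) : ℝ) * ((s : ℝ) + 2) := by exact_mod_cast n1
  have e2 : (((l + 1 + s + 1).choose (l + 1) : ℕ) : ℝ) * ((l : ℝ) + 1)
      = (((l + 1 + s + 1).choose l : ℕ) : ℝ) * ((s : ℝ) + 2) := by exact_mod_cast n2
  have e3 : ((l : ℝ) + 1 + (s : ℝ) + 1) * (((l + 1 + s).choose (l + 1) : ℕ) : ℝ)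
      = (((l + 1 + s + 1).choose (l + 1) : ℕ) : ℝ) * ((s : ℝ) + 1) := by exact_mod_cast n3
  simp only [dhc, show l + 1 + s + 2 - (l + 1) = s + 2 from by omega,
    show l + 1 + s + 1 - l = s + 2 from by omega,
    show l + 1 + s + 1 - (l + 1) = s + 1 from by omega,
    show l + 1 + s - (l + 1) = s from by omega]
  rw [poch_two (n/2 + ((l + 1 : ℕ) : ℝ)) s,
    poch_front_two ((k : ℝ) - ((l + 1 + s + 2 : ℕ) : ℝ)) s,
    poch_front_back (n/2 + ((l : ℕ) : ℝ)) s,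
    poch_front_back ((k : ℝ) - ((l + 1 + s + 1 : ℕ) : ℝ)) s,
    poch_succ (n/2 + ((l + 1 : ℕ) : ℝ)) s,
    poch_succ' ((k : ℝ) - ((l + 1 + s + 1 : ℕ) : ℝ)) s,
    show n/2 + ((l : ℕ) : ℝ) + 1 = n/2 + ((l + 1 : ℕ) : ℝ) from by push_cast; ring,
    show (k : ℝ) - ((l + 1 + s + 2 : ℕ) : ℝ) + 1 + 1 = (k : ℝ) - ((l + 1 + s : ℕ) : ℝ) from by
      push_cast; ring,
    show (k : ℝ) - ((l + 1 + s + 1 : ℕ) : ℝ) + 1 = (k : ℝ) - ((l + 1 + s : ℕ) : ℝ) from by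
      push_cast; ring]
  have hne : (((s : ℝ) + 2) * ((l : ℝ) + (s : ℝ) + 2)) ≠ 0 := by positivity
  apply mul_left_cancel₀ hne
  set P : ℝ := poch (n/2 + ((l + 1 : ℕ) : ℝ)) s with hP
  set Q : ℝ := poch ((k : ℝ) - ((l + 1 + s : ℕ) : ℝ)) s with hQ
  push_cast
  linear_combination
    (-((-1 : ℝ))^s) * (((l:ℝ) + (s:ℝ) + 2) * P * Q
        * (n/2 + (l:ℝ) + 1 + (s:ℝ)) * (n/2 + (l:ℝ) + 2 + (s:ℝ))
        * ((k:ℝ) - (l:ℝ) - (s:ℝ) - 3) * ((k:ℝ) - (l:ℝ) - (s:ℝ) - 2)) * e1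
    + ((-1 : ℝ))^s * (((l:ℝ) + (s:ℝ) + 2) * P * Q
        * (n/2 + (l:ℝ)) * (n/2 + (l:ℝ) + 1 + (s:ℝ))
        * ((k:ℝ) - (l:ℝ) - (s:ℝ) - 2) * ((k:ℝ) - (l:ℝ) - 1)) * e2
    + ((-1 : ℝ))^s * (((s:ℝ) + 2)
        * (((l:ℝ) + (s:ℝ) + 2) * (((l:ℝ) + (s:ℝ) + 2) - (k:ℝ))
          * (((l:ℝ) + (s:ℝ) + 2) - 1 + n/2) * (((l:ℝ) + (s:ℝ) + 2) - 1 + n/2 - (k:ℝ)))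
        * P * Q) * e3

lemma key_all (n : ℝ) (k M : ℕ) (l : ℕ) (hl : l < M + 3) :
    dhc n k (M + 2) l
      = dhs n k M l
        + (((l : ℝ) + 1) * (l : ℝ)
            - (2 * ((M : ℝ) + 1) * ((k : ℝ) - ((M : ℝ) + 1) - n/2) + n * ((k : ℝ) - 1)/2))
          * dhc n k (M + 1) l
        - ((M : ℝ) + 1) * (((M : ℝ) + 1) - (k : ℝ)) * (((M : ℝ) + 1) - 1 + n/2)
            * (((M : ℝ) + 1) - 1 + n/2 - (k : ℝ)) * dhc n k M l := by
  match l with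
  | 0 =>
    have h := keyC0 n k M
    simp only [dhs, Nat.cast_zero] at h ⊢
    linear_combination h
  | (l' + 1) =>
    have hcases : l' + 1 ≤ M ∨ l' = M ∨ l' = M + 1 := by omega
    rcases hcases with h | h | h
    · obtain ⟨s, rfl⟩ := Nat.exists_eq_add_of_le h
      have h := keyC1 n k l' s
      simp only [dhs]
      push_cast at h ⊢
      linear_combination h
    · subst h
      have h := keyB n k l'
      simp only [dhs]
      push_cast at h ⊢
      linear_combination h
    · subst h
      simp only [dhs]
      rw [dhc_self, dhc_self, dhc_of_lt n k (by omega : M + 1 < M + 2),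
        dhc_of_lt n k (by omega : M < M + 2)]
      ring

lemma main_rec (n : ℝ) (k M : ℕ) (y : ℝ) :
    dualHahnQ n k (M + 2) y
      = (y - 2 * ((M : ℝ) + 1) * ((k : ℝ) - ((M : ℝ) + 1) - n/2) - n * ((k : ℝ) - 1)/2)
          * dualHahnQ n k (M + 1) y
        - ((M : ℝ) + 1) * (((M : ℝ) + 1) - (k : ℝ)) * (((M : ℝ) + 1) - 1 + n/2)
            * (((M : ℝ) + 1) - 1 + n/2 - (k : ℝ)) * dualHahnQ n k M y := by
  rw [dualHahnQ_eq n k (M + 2) y, dualHahnQ_eq n k (M + 1) y, dualHahnQ_eq n k M y]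
  rw [show Finset.range (M + 1 + 1) = Finset.range (M + 2) from rfl]
  set A : ℝ := 2 * ((M : ℝ) + 1) * ((k : ℝ) - ((M : ℝ) + 1) - n/2) + n * ((k : ℝ) - 1)/2 with hA
  set D : ℝ := ((M : ℝ) + 1) * (((M : ℝ) + 1) - (k : ℝ)) * (((M : ℝ) + 1) - 1 + n/2)
      * (((M : ℝ) + 1) - 1 + n/2 - (k : ℝ)) with hD
  have hkey : ∀ l ∈ Finset.range (M + 2 + 1),
      dhc n k (M + 2) l * dhB y l
        = dhs n k M l * dhB y l + (((l : ℝ) + 1) * (l : ℝ) - A) * dhc n k (M + 1) l * dhB y l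
            - D * dhc n k M l * dhB y l := by
    intro l hl
    rw [key_all n k M l (Finset.mem_range.mp hl)]
    ring
  rw [Finset.sum_congr rfl hkey, Finset.sum_sub_distrib, Finset.sum_add_distrib]
  -- first sum
  have E1 : ∑ l ∈ Finset.range (M + 2 + 1), dhs n k M l * dhB y l
      = ∑ l ∈ Finset.range (M + 2), dhc n k (M + 1) l * dhB y (l + 1) := by
    rw [Finset.sum_range_succ' (fun l => dhs n k M l * dhB y l) (M + 2)]
    simp [dhs]
  -- second sum
  have E2 : ∑ l ∈ Finset.range (M + 2 + 1), (((l : ℝ) + 1) * (l : ℝ) - A) * dhc n k (M + 1) l * dhB y l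
      = ∑ l ∈ Finset.range (M + 2), (((l : ℝ) + 1) * (l : ℝ) - A) * dhc n k (M + 1) l * dhB y l := by
    rw [Finset.sum_range_succ]
    rw [dhc_of_lt n k (by omega : M + 1 < M + 2)]
    ring
  -- third sum
  have E3 : ∑ l ∈ Finset.range (M + 2 + 1), D * dhc n k M l * dhB y l
      = D * ∑ l ∈ Finset.range (M + 1), dhc n k M l * dhB y l := by
    rw [Finset.sum_range_succ, Finset.sum_range_succ]
    rw [dhc_of_lt n k (by omega : M < M + 2), dhc_of_lt n k (by omega : M < M + 1),
      Finset.mul_sum]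
    simp [mul_assoc]
  rw [E1, E2, E3]
  have expand : (y - A) * ∑ l ∈ Finset.range (M + 2), dhc n k (M + 1) l * dhB y l
      = (∑ l ∈ Finset.range (M + 2), dhc n k (M + 1) l * dhB y (l + 1))
        + ∑ l ∈ Finset.range (M + 2), (((l : ℝ) + 1) * (l : ℝ) - A) * dhc n k (M + 1) l * dhB y l := by
    rw [Finset.mul_sum, ← Finset.sum_add_distrib]
    refine Finset.sum_congr rfl fun l _ => ?_
    linear_combination (dhc n k (M + 1) l) * y_mul_dhB y l
  linear_combination (-1 : ℝ) * expand
    - (∑ l ∈ Finset.range (M + 2), dhc n k (M + 1) l * dhB y l) * hA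

/-- The explicitly defined polynomials `q_m` satisfy `q_0 = 1` and
the recursion
`q_{m+1} = [y − 2m(k−m−n/2) − n(k−1)/2] q_m − m(m−k)(m−1+n/2)(m−1+n/2−k) q_{m−1}`
for `0 ≤ m ≤ k−1` (with `q_{−1} := 0`; the `q_{−1}` term carries the coefficient
`m`, which vanishes when `m = 0`, so it never contributes). -/
theorem dualHahnQ_satisfies_recursion
    (n : ℝ) (k : ℕ) (hk : 1 ≤ k) :
    (∀ y : ℝ, dualHahnQ n k 0 y = 1) ∧
    (∀ m : ℕ, m < k → ∀ y : ℝ,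
      dualHahnQ n k (m + 1) y
        = (y - 2 * (m : ℝ) * ((k : ℝ) - (m : ℝ) - n/2) - n * ((k : ℝ) - 1)/2)
            * dualHahnQ n k m y
          - (m : ℝ) * ((m : ℝ) - (k : ℝ)) * ((m : ℝ) - 1 + n/2)
              * ((m : ℝ) - 1 + n/2 - (k : ℝ)) * dualHahnQ n k (m - 1) y) := by
  constructor
  · intro y
    simp [dualHahnQ, poch]
  · intro m hm y
    match m with
    | 0 =>
      simp [dualHahnQ, poch, Finset.sum_range_succ, Finset.Icc_self]
      ring
    | (M + 1) =>
      have h := main_rec n k M y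
      simp only [Nat.add_sub_cancel]
      push_cast
      linear_combination h
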